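/- Every distributive (∨,0)-semilattice having no strictly decreasing ω₁-sequence of elements satisfies URP⁺_sr (hence also URP_sr). -/

import Mathlib

/-- ω₁, realized as the set of ordinals below `(ℵ₁).ord`. -/
abbrev W : Type 1 := {o : Ordinal // o < (Cardinal.aleph 1).ord}

/-- There is no strictly decreasing ω₁-sequence in `S`. -/
def NoStrictDecOmega1 (S : Type*) [Preorder S] : Prop :=
  ¬ ∃ x : W → S, ∀ ξ η : W, ξ < η → x η < x ξ

/-- A join-semilattice is distributive if `c ≤ a ⊔ b` implies `c = a' ⊔ b'` for some
`a' ≤ a`, `b' ≤ b`. -/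
def DistribSemilatticeSup (S : Type*) [SemilatticeSup S] : Prop :=
  ∀ a b c : S, c ≤ a ⊔ b → ∃ a' b', a' ≤ a ∧ b' ≤ b ∧ c = a' ⊔ b'

/-- `B` is ℵ₀-downward directed: every countable subset of `B` lies above some element
of `B`. -/
def DownDirectedCtbl {S : Type*} [Preorder S] (B : Set S) : Prop :=
  ∀ C ⊆ B, C.Countable → ∃ b ∈ B, ∀ c ∈ C, b ≤ c

open scoped Classical in
/-- `s ∈ ◇A` in a join-semilattice: `s` is the join `Σ_{p ⊆ A', |p| = 2} x_p` (with respect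
to `∨`) for some finite `A' ⊆ A`, where `x_{{a,b}} ≤ a, b` for all distinct `a, b ∈ A'`. -/
def memDiat {S : Type*} [SemilatticeSup S] (A : Set S) (s : S) : Prop :=
  ∃ (A' : Finset S) (x : Sym2 S → S), ↑A' ⊆ A ∧
    (∀ a ∈ A', ∀ b ∈ A', a ≠ b → x s(a, b) ≤ a) ∧
    ∃ hne : (A'.sym2.filter (fun p => ¬ p.IsDiag)).Nonempty,
      s = (A'.sym2.filter (fun p => ¬ p.IsDiag)).sup' hne x

/-- The uniform refinement property `URP_sr(e)`. -/
def URPsr {S : Type*} [SemilatticeSup S] (e : S) : Prop :=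
  ∀ A B : Set S, ¬ A.Countable → DownDirectedCtbl B →
    (∀ a ∈ A, ∀ b ∈ B, a ≤ e ∧ e ≤ a ⊔ b) →
    ∃ x : S, memDiat A x ∧ ∀ b ∈ B, e ≤ x ⊔ b
/-- The uniform refinement property `URP⁺_sr(e)`. -/
def URPsrPlus {S : Type*} [SemilatticeSup S] (e : S) : Prop :=
  ∀ a₀ a₁ : S, ∀ B : Set S, DownDirectedCtbl B →
    (∀ b ∈ B, e ≤ a₀ ⊔ b ∧ e ≤ a₁ ⊔ b) →
    ∃ a : S, a ≤ a₀ ∧ a ≤ a₁ ∧ ∀ b ∈ B, e ≤ a ⊔ b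


open scoped Classical in
noncomputable def chainSeq {S : Type*} [SemilatticeSup S] [OrderBot S]
    (B : Set S) (wit : S → S) : Ordinal.{0} → S :=
  Ordinal.lt_wf.fix (C := fun _ => S) fun o rec =>
    if h : ∃ b, b ∈ B ∧ ∀ o' (ho' : o' < o), b ≤ rec o' ho' ∧ b ≤ wit (rec o' ho')
    then h.choose else ⊥

open scoped Classical in
theorem chainSeq_eq {S : Type*} [SemilatticeSup S] [OrderBot S]
    (B : Set S) (wit : S → S) (o : Ordinal.{0}) :
    chainSeq B wit o =
      if h : ∃ b, b ∈ B ∧ ∀ o' (_ : o' < o),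
          b ≤ chainSeq B wit o' ∧ b ≤ wit (chainSeq B wit o')
      then h.choose else ⊥ := by
  rw [chainSeq, Ordinal.lt_wf.fix_eq]

open Cardinal in
theorem exists_lb {S : Type*} [SemilatticeSup S] [OrderBot S]
    (hnd : NoStrictDecOmega1 S) {B : Set S} (hB : DownDirectedCtbl B) :
    ∃ b ∈ B, ∀ c ∈ B, b ≤ c := by
  by_contra hcon
  push_neg at hcon
  have hwit' : ∀ b : S, ∃ c : S, b ∈ B → c ∈ B ∧ ¬ b ≤ c := by
    intro b
    by_cases hb : b ∈ B
    · obtain ⟨c, hc, hbc⟩ := hcon b hb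
      exact ⟨c, fun _ => ⟨hc, hbc⟩⟩
    · exact ⟨⊥, fun h => absurd h hb⟩
  choose wit hwit using hwit'
  have inv : ∀ o : Ordinal.{0}, o < (aleph 1).ord →
      chainSeq B wit o ∈ B ∧
        ∀ o' < o, chainSeq B wit o ≤ chainSeq B wit o' ∧
          chainSeq B wit o ≤ wit (chainSeq B wit o') := by
    intro o
    induction o using Ordinal.induction with
    | _ o IH =>
      intro ho
      have hIio : (Set.Iio o).Countable := by
        rw [Cardinal.countable_iff_lt_aleph_one, Ordinal.mk_Iio_ordinal,
          Cardinal.lift_lt_aleph_one]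
        exact Cardinal.lt_ord.mp ho
      obtain ⟨b, hbB, hb⟩ := hB
        ((fun o' => chainSeq B wit o') '' (Set.Iio o) ∪
          (fun o' => wit (chainSeq B wit o')) '' (Set.Iio o))
        (by
          rintro s (⟨o', ho', rfl⟩ | ⟨o', ho', rfl⟩)
          · exact (IH o' ho' (ho'.trans ho)).1
          · exact (hwit _ (IH o' ho' (ho'.trans ho)).1).1)
        ((hIio.image _).union (hIio.image _))
      have hex : ∃ b, b ∈ B ∧ ∀ o' (_ : o' < o),
          b ≤ chainSeq B wit o' ∧ b ≤ wit (chainSeq B wit o') :=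
        ⟨b, hbB, fun o' ho' =>
          ⟨hb _ (Or.inl ⟨o', ho', rfl⟩), hb _ (Or.inr ⟨o', ho', rfl⟩)⟩⟩
      have heq : chainSeq B wit o = hex.choose := by
        rw [chainSeq_eq B wit o, dif_pos hex]
      rw [heq]
      exact ⟨hex.choose_spec.1, fun o' ho' => hex.choose_spec.2 o' ho'⟩
  apply hnd
  refine ⟨fun ξ => chainSeq B wit ξ.val, fun ξ η hlt => ?_⟩
  have hlt' : ξ.val < η.val := hlt
  have h1 := (inv η.val η.prop).2 ξ.val hlt'
  have hξB := (inv ξ.val ξ.prop).1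
  refine lt_of_le_of_ne h1.1 fun heq => ?_
  have heq' : chainSeq B wit η.val = chainSeq B wit ξ.val := heq
  rw [heq'] at h1
  exact (hwit _ hξB).2 h1.2

/-- Proposition 7.5: every distributive `(∨,0)`-semilattice with no strictly decreasing
ω₁-sequence satisfies `URP⁺_sr` (hence also `URP_sr`). -/
theorem stmt_15 {S : Type*} [SemilatticeSup S] [OrderBot S]
    (hd : DistribSemilatticeSup S) (hnd : NoStrictDecOmega1 S) :
    (∀ e : S, URPsrPlus e) ∧ (∀ e : S, URPsr e) := by
  have key : ∀ e a₀ a₁ b : S, e ≤ a₀ ⊔ b → e ≤ a₁ ⊔ b →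
      ∃ c, c ≤ a₀ ∧ c ≤ a₁ ∧ e ≤ c ⊔ b := by
    intro e a₀ a₁ b h0 h1
    obtain ⟨u, v₀, hu, hv₀, he⟩ := hd a₀ b e h0
    have hue : u ≤ e := he ▸ le_sup_left
    obtain ⟨c, v₁, hc, hv₁, huc⟩ := hd a₁ b u (hue.trans h1)
    refine ⟨c, (huc ▸ le_sup_left : c ≤ u).trans hu, hc, ?_⟩
    calc e = c ⊔ v₁ ⊔ v₀ := by rw [← huc, ← he]
    _ ≤ c ⊔ b := by
        rw [sup_assoc]
        exact sup_le_sup_left (sup_le hv₁ hv₀) c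
  constructor
  · intro e a₀ a₁ B hB hyp
    obtain ⟨b₀, hb₀B, hb₀⟩ := exists_lb hnd hB
    obtain ⟨c, hc₀, hc₁, hce⟩ := key e a₀ a₁ b₀ (hyp b₀ hb₀B).1 (hyp b₀ hb₀B).2
    exact ⟨c, hc₀, hc₁, fun b hb => hce.trans (sup_le_sup_left (hb₀ b hb) c)⟩
  · intro e A B hA hB hyp
    classical
    obtain ⟨b₀, hb₀B, hb₀⟩ := exists_lb hnd hB
    have hnt : A.Nontrivial := by
      by_contra h
      exact hA ((Set.not_nontrivial_iff.mp h).countable)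
    obtain ⟨a₀, ha₀, a₁, ha₁, hne⟩ := hnt
    obtain ⟨c, hc₀, hc₁, hce⟩ := key e a₀ a₁ b₀
      (hyp a₀ ha₀ b₀ hb₀B).2 (hyp a₁ ha₁ b₀ hb₀B).2
    refine ⟨c, ⟨{a₀, a₁}, fun _ => c, ?_, ?_, ?_, ?_⟩,
      fun b hb => hce.trans (sup_le_sup_left (hb₀ b hb) c)⟩
    · intro a ha
      simp only [Finset.coe_insert, Finset.coe_singleton, Set.mem_insert_iff,
        Set.mem_singleton_iff] at ha
      rcases ha with rfl | rfl
      · exact ha₀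
      · exact ha₁
    · intro a ha b hbmem hab
      simp only [Finset.mem_insert, Finset.mem_singleton] at ha
      rcases ha with rfl | rfl
      · exact hc₀
      · exact hc₁
    · refine ⟨s(a₀, a₁), ?_⟩
      rw [Finset.mem_filter]
      constructor
      · rw [Finset.mk_mem_sym2_iff]
        simp
      · simpa using hne
    · exact (Finset.sup'_const ..).symm
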